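/- The matrices H₁ = [[1,0,0],[-2conj(ω),1,0],[-2ω-1,2ω,1]] and H₂ = [[1,0,0],[conj(ω),1,0],[-ω,-ω,1]] with ω = (1-i√3)/2 commute, are both parabolic (unipotent lower-triangular), and generate a free abelian group of rank 2 in SU(2,1). -/
import Mathlib


open Complex Matrix

noncomputable section

/-- `ω = (1 - i√3)/2`. -/
def ω : ℂ := (1 - Complex.I * Real.sqrt 3) / 2

def formJ : Matrix (Fin 3) (Fin 3) ℂ := !![0, 0, 1; 0, 1, 0; 1, 0, 0]

def InSU21 (M : Matrix (Fin 3) (Fin 3) ℂ) : Prop :=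
  M.conjTranspose * formJ * M = formJ ∧ M.det = 1

def H₁ : Matrix (Fin 3) (Fin 3) ℂ :=
  !![1, 0, 0; -2 * (starRingEnd ℂ) ω, 1, 0; -2 * ω - 1, 2 * ω, 1]

def H₂ : Matrix (Fin 3) (Fin 3) ℂ :=
  !![1, 0, 0; (starRingEnd ℂ) ω, 1, 0; -ω, -ω, 1]

lemma hsq : ω ^ 2 = ω - 1 := by
  have h3 : (Real.sqrt 3 : ℂ) ^ 2 = 3 := by
    rw [← Complex.ofReal_pow, Real.sq_sqrt (by norm_num)]; norm_num
  unfold ω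
  linear_combination (((Real.sqrt 3:ℂ))^2/4) * Complex.I_sq - (1/4) * h3

lemma hstar : (starRingEnd ℂ) ω = 1 - ω := by
  unfold ω
  rw [map_div₀, map_sub, _root_.map_mul, Complex.conj_I, Complex.conj_ofReal,
    RingHom.map_one, map_ofNat]
  ring

lemma homega_unit : ω * (1 - ω) = 1 := by linear_combination -hsq

lemma homega_ne : ω ≠ 0 := by
  intro h
  have := homega_unit
  rw [h] at this; simp at this

lemma homega_ne1 : (1 : ℂ) - ω ≠ 0 := by
  intro h
  have := homega_unit
  rw [h] at this; simp at this

lemma htwo : (2 : ℂ) - 4 * ω ≠ 0 := by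
  intro h
  have h2 : ((1:ℂ) - 2*ω)^2 = -3 := by linear_combination 4*hsq
  have h1 : (1:ℂ) - 2*ω = 0 := by linear_combination h/2
  rw [h1] at h2
  norm_num at h2

/-- Lower unipotent matrices. -/
def Lm (x y c : ℂ) : Matrix (Fin 3) (Fin 3) ℂ := !![1,0,0; x,1,0; c,y,1]

lemma Lm_mul (x y c x' y' c' : ℂ) :
    Lm x y c * Lm x' y' c' = Lm (x+x') (y+y') (c+c'+y*x') := by
  unfold Lm
  ext i j
  fin_cases i <;> fin_cases j <;> simp [Matrix.mul_apply, Fin.sum_univ_succ] <;> ring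

lemma Lm_one : Lm 0 0 0 = 1 := by
  rw [Matrix.one_fin_three]; rfl

lemma Lm_inv (x y c : ℂ) : Lm x y c * Lm (-x) (-y) (x*y - c) = 1 ∧
    Lm (-x) (-y) (x*y - c) * Lm x y c = 1 := by
  constructor <;> rw [Lm_mul, ← Lm_one] <;> norm_num <;> ring_nf

lemma unit_inv_eq (u : GL (Fin 3) ℂ) (M : Matrix (Fin 3) (Fin 3) ℂ)
    (h1 : (u : Matrix (Fin 3) (Fin 3) ℂ) * M = 1) :
    ((u⁻¹ : GL (Fin 3) ℂ) : Matrix (Fin 3) (Fin 3) ℂ) = M := by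
  calc ((u⁻¹ : GL (Fin 3) ℂ) : Matrix (Fin 3) (Fin 3) ℂ)
      = ((u⁻¹ : GL (Fin 3) ℂ) : Matrix (Fin 3) (Fin 3) ℂ) * ((u : Matrix (Fin 3) (Fin 3) ℂ) * M) := by
        rw [h1, mul_one]
    _ = (((u⁻¹ * u : GL (Fin 3) ℂ)) : Matrix (Fin 3) (Fin 3) ℂ) * M := by
        rw [Units.val_mul, mul_assoc]
    _ = M := by rw [inv_mul_cancel, Units.val_one, one_mul]

lemma pow_Lm (u : GL (Fin 3) ℂ) (x y c : ℂ)
    (h : (u : Matrix (Fin 3) (Fin 3) ℂ) = Lm x y c) :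
    ∀ k : ℕ, ∃ c', ((u ^ k : GL (Fin 3) ℂ) : Matrix (Fin 3) (Fin 3) ℂ)
      = Lm ((k : ℂ) * x) ((k : ℂ) * y) c' := by
  intro k
  induction k with
  | zero => exact ⟨0, by simp [Lm_one]⟩
  | succ k ih =>
    obtain ⟨c', hc'⟩ := ih
    refine ⟨c' + c + (k : ℂ) * y * x, ?_⟩
    rw [pow_succ, Units.val_mul, hc', h, Lm_mul]
    push_cast
    ring_nf

lemma zpow_Lm (u : GL (Fin 3) ℂ) (x y c : ℂ)
    (h : (u : Matrix (Fin 3) (Fin 3) ℂ) = Lm x y c) :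
    ∀ m : ℤ, ∃ c', ((u ^ m : GL (Fin 3) ℂ) : Matrix (Fin 3) (Fin 3) ℂ)
      = Lm ((m : ℂ) * x) ((m : ℂ) * y) c' := by
  intro m
  cases m with
  | ofNat k =>
    obtain ⟨c', hc'⟩ := pow_Lm u x y c h k
    exact ⟨c', by rw [Int.ofNat_eq_coe, zpow_natCast, hc']; push_cast; ring_nf⟩
  | negSucc k =>
    obtain ⟨c', hc'⟩ := pow_Lm u x y c h (k+1)
    refine ⟨((k:ℂ)+1) * x * (((k:ℂ)+1) * y) - c', ?_⟩
    rw [zpow_negSucc, unit_inv_eq _ _ (by rw [hc']; exact (Lm_inv _ _ _).1)]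
    have : ((Int.negSucc k : ℤ) : ℂ) = -((k:ℂ)+1) := by
      push_cast [Int.negSucc_eq]; ring
    rw [this]
    congr 1 <;> push_cast <;> ring

lemma zpow_Lm0 (u : GL (Fin 3) ℂ) (c : ℂ)
    (h : (u : Matrix (Fin 3) (Fin 3) ℂ) = Lm 0 0 c) :
    ∀ m : ℤ, ((u ^ m : GL (Fin 3) ℂ) : Matrix (Fin 3) (Fin 3) ℂ) = Lm 0 0 ((m : ℂ) * c) := by
  have hnat : ∀ k : ℕ, ((u ^ k : GL (Fin 3) ℂ) : Matrix (Fin 3) (Fin 3) ℂ)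
      = Lm 0 0 ((k : ℂ) * c) := by
    intro k
    induction k with
    | zero => simp [Lm_one]
    | succ k ih =>
      rw [pow_succ, Units.val_mul, ih, h, Lm_mul]
      push_cast; ring_nf
  intro m
  cases m with
  | ofNat k => rw [Int.ofNat_eq_coe, zpow_natCast, hnat]; norm_num
  | negSucc k =>
    rw [zpow_negSucc, unit_inv_eq _ _ (by
      rw [hnat (k+1)]
      have := (Lm_inv 0 0 (((k:ℕ)+1:ℕ) * c)).1
      simpa using this)]
    have : ((Int.negSucc k : ℤ) : ℂ) = -((k:ℂ)+1) := by
      push_cast [Int.negSucc_eq]; ring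
    rw [this]
    congr 1
    push_cast; ring

lemma hH₁ : H₁ = Lm (-2 * (starRingEnd ℂ) ω) (2 * ω) (-2 * ω - 1) := rfl

lemma hH₂ : H₂ = Lm ((starRingEnd ℂ) ω) (-ω) (-ω) := rfl

lemma Lm_congr (a b c a' b' c' : ℂ) (h1 : a = a') (h2 : b = b') (h3 : c = c') :
    Lm a b c = Lm a' b' c' := by rw [h1, h2, h3]

lemma Lm_entry10 (x y c : ℂ) : Lm x y c 1 0 = x := rfl
lemma Lm_entry20 (x y c : ℂ) : Lm x y c 2 0 = c := rfl

/-- `H₁` and `H₂` lie in `SU(2,1)`, commute, are parabolic (unipotent and not the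
identity), and generate a free abelian group of rank 2. -/
theorem torus_holonomy_free_abelian :
    InSU21 H₁ ∧ InSU21 H₂ ∧
    H₁ * H₂ = H₂ * H₁ ∧
    ((H₁ - 1) ^ 3 = 0 ∧ H₁ ≠ 1) ∧
    ((H₂ - 1) ^ 3 = 0 ∧ H₂ ≠ 1) ∧
    (∀ u₁ u₂ : GL (Fin 3) ℂ, (u₁ : Matrix (Fin 3) (Fin 3) ℂ) = H₁ →
      (u₂ : Matrix (Fin 3) (Fin 3) ℂ) = H₂ →
      ∀ m n : ℤ, u₁ ^ m * u₂ ^ n = 1 → m = 0 ∧ n = 0) := by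
  refine ⟨⟨?_, ?_⟩, ⟨?_, ?_⟩, ?_, ⟨?_, ?_⟩, ⟨?_, ?_⟩, ?_⟩
  · -- H₁ᴴ J H₁ = J
    ext i j
    fin_cases i <;> fin_cases j <;>
      simp [H₁, formJ, Matrix.mul_apply, Fin.sum_univ_succ, Matrix.conjTranspose_apply,
        Complex.star_def, _root_.map_mul, map_sub, map_neg, map_ofNat, Complex.conj_conj,
        Matrix.vecHead, Matrix.vecTail, hstar] <;>
      (first | ring1 | linear_combination -8 * hsq | linear_combination -4 * hsq | linear_combination 8 * hsq | linear_combination 4 * hsq)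
  · -- det H₁ = 1
    simp [H₁, Matrix.det_fin_three]
  · -- H₂ᴴ J H₂ = J
    ext i j
    fin_cases i <;> fin_cases j <;>
      simp [H₂, formJ, Matrix.mul_apply, Fin.sum_univ_succ, Matrix.conjTranspose_apply,
        Complex.star_def, _root_.map_mul, map_sub, map_neg, map_ofNat, Complex.conj_conj,
        Matrix.vecHead, Matrix.vecTail, hstar] <;>
      (first | ring1 | linear_combination -2 * hsq | linear_combination -hsq | linear_combination 2 * hsq | linear_combination hsq)
  · simp [H₂, Matrix.det_fin_three]
  · -- commute
    rw [hH₁, hH₂, Lm_mul, Lm_mul]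
    congr 1 <;> ring
  · -- (H₁ - 1)^3 = 0
    rw [pow_succ, pow_two]
    ext i j
    fin_cases i <;> fin_cases j <;>
      simp [H₁, Matrix.mul_apply, Fin.sum_univ_succ, Matrix.sub_apply, Matrix.one_apply]
  · -- H₁ ≠ 1
    intro h
    have := congrFun (congrFun h 2) 1
    simp [H₁, Matrix.one_apply] at this
    exact homega_ne this
  · -- (H₂ - 1)^3 = 0
    rw [pow_succ, pow_two]
    ext i j
    fin_cases i <;> fin_cases j <;>
      simp [H₂, Matrix.mul_apply, Fin.sum_univ_succ, Matrix.sub_apply, Matrix.one_apply]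
  · -- H₂ ≠ 1
    intro h
    have := congrFun (congrFun h 2) 1
    simp [H₂, Matrix.one_apply] at this
    exact homega_ne this
  · -- free abelian
    intro u₁ u₂ h1 h2 m n heq
    have hcomm : Commute u₁ u₂ := by
      apply Units.ext
      show ((u₁ * u₂ : GL (Fin 3) ℂ) : Matrix (Fin 3) (Fin 3) ℂ)
        = ((u₂ * u₁ : GL (Fin 3) ℂ) : Matrix (Fin 3) (Fin 3) ℂ)
      rw [Units.val_mul, Units.val_mul, h1, h2, hH₁, hH₂, Lm_mul, Lm_mul]
      congr 1 <;> ring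
    -- step 1 : n = 2 m
    obtain ⟨c₁, e₁⟩ := zpow_Lm u₁ _ _ _ (h1.trans hH₁) m
    obtain ⟨c₂, e₂⟩ := zpow_Lm u₂ _ _ _ (h2.trans hH₂) n
    have hval : ((u₁ ^ m : GL (Fin 3) ℂ) : Matrix (Fin 3) (Fin 3) ℂ)
        * ((u₂ ^ n : GL (Fin 3) ℂ) : Matrix (Fin 3) (Fin 3) ℂ) = 1 := by
      rw [← Units.val_mul, heq, Units.val_one]
    rw [e₁, e₂, Lm_mul, ← Lm_one] at hval
    have h10 := congrFun (congrFun hval 1) 0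
    rw [Lm_entry10, Lm_entry10, hstar] at h10
    have hn2m : (n : ℂ) = 2 * (m : ℂ) := by
      have hfac : ((1 : ℂ) - ω) * ((n : ℂ) - 2 * (m : ℂ)) = 0 := by
        linear_combination h10
      rcases mul_eq_zero.mp hfac with h | h
      · exact absurd h homega_ne1
      · linear_combination h
    have hnm : n = 2 * m := by exact_mod_cast hn2m
    -- step 2 : collapse to one generator
    have hw : ((u₁ * u₂ ^ 2 : GL (Fin 3) ℂ) : Matrix (Fin 3) (Fin 3) ℂ)
        = Lm 0 0 (2 - 4 * ω) := by
      rw [Units.val_mul, Units.val_pow_eq_pow_val, h1, h2, hH₁, hH₂, pow_two,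
        Lm_mul, Lm_mul, hstar]
      refine Lm_congr _ _ _ _ _ _ (by first | ring1 | linear_combination -hsq) (by first | ring1 | linear_combination -hsq) (by first | ring1 | linear_combination (-(3:ℂ)) * hsq | linear_combination (-(4:ℂ)) * hsq | linear_combination (4:ℂ) * hsq)
    have hkey : (u₁ * u₂ ^ 2) ^ m = 1 := by
      rw [hnm, show ((2 * m : ℤ)) = ((2:ℕ) : ℤ) * m by push_cast; ring,
        _root_.zpow_mul, zpow_natCast] at heq
      rw [(hcomm.pow_right 2).mul_zpow]
      exact heq
    have := zpow_Lm0 (u₁ * u₂ ^ 2) _ hw m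
    rw [hkey, Units.val_one, ← Lm_one] at this
    have h20 := congrFun (congrFun this 2) 0
    rw [Lm_entry20, Lm_entry20] at h20
    have hm : m = 0 := by
      rcases mul_eq_zero.mp h20.symm with h | h
      · exact_mod_cast h
      · exact absurd h htwo
    exact ⟨hm, by omega⟩

end
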